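/- Let M be a finitely generated W(k)-module and F ⊆ M a submodule such that for every n ≥ 1 the induced map F/p^nF → M/p^nM is injective (equivalently, F ∩ p^n·M = p^n·F for all n ≥ 1). Then F is a direct summand of M: there exists a W(k)-submodule G ⊆ M with F ⊕ G = M (IsCompl F G). -/

import Mathlib

open Submodule LinearMap DirectSum

universe u v

theorem aux_split {R : Type u} [CommRing R] [IsDomain R] [IsPrincipalIdealRing R]
    (ϖ : R) (hassoc : ∀ a : R, Irreducible a → Associated a ϖ)
    {M : Type v} [AddCommGroup M] [Module R M] [Module.Finite R M]
    (F : Submodule R M)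
    (h : ∀ n : ℕ, 1 ≤ n → ∀ x ∈ F, (∃ y : M, x = ϖ ^ n • y) → ∃ y ∈ F, x = ϖ ^ n • y) :
    ∃ G : Submodule R M, IsCompl F G := by
  classical
  set q : M →ₗ[R] M ⧸ F := F.mkQ with hq
  -- key lifting lemma from purity
  have key : ∀ (ν : M ⧸ F) (n : ℕ), (ϖ ^ n) • ν = 0 →
      ∃ m : M, q m = ν ∧ (ϖ ^ n) • m = 0 := by
    intro ν n hν
    rcases Nat.eq_zero_or_pos n with he | he
    · refine ⟨0, ?_, by simp⟩
      have : ν = 0 := by simpa [he] using hν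
      simp [this]
    · obtain ⟨x, hx⟩ := F.mkQ_surjective ν
      have hxF : (ϖ ^ n) • x ∈ F := by
        rw [← Submodule.ker_mkQ F]
        simp only [LinearMap.mem_ker, map_smul, hx, hν]
      obtain ⟨y, hyF, hy⟩ := h n he _ hxF ⟨x, rfl⟩
      refine ⟨x - y, ?_, by rw [smul_sub, ← hy, sub_self]⟩
      have : q y = 0 := by rwa [hq, ← LinearMap.mem_ker, Submodule.ker_mkQ]
      rw [map_sub, this, sub_zero]; exact hx
  -- structure theorem applied to M ⧸ F (via ULift for universes)
  haveI : Module.Finite R (ULift.{u} (M ⧸ F)) :=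
    Module.Finite.equiv (ULift.moduleEquiv (R := R) (M := M ⧸ F)).symm
  obtain ⟨n, ι, fι, π, hπ, e, ⟨φ⟩⟩ :=
    Module.equiv_free_prod_directSum (R := R) (M := ULift.{u} (M ⧸ F))
  set D := fun i : ι => R ⧸ (R ∙ π i ^ e i) with hD
  set ψ : (M ⧸ F) ≃ₗ[R] (Fin n →₀ R) × ⨁ i : ι, D i :=
    (ULift.moduleEquiv (R := R) (M := M ⧸ F)).symm.trans φ with hψ
  have qsurj : Function.Surjective q := F.mkQ_surjective
  obtain ⟨t₁, ht₁⟩ := Module.projective_lifting_property q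
    (ψ.symm.toLinearMap.comp (LinearMap.inl R (Fin n →₀ R) _)) qsurj
  -- torsion components
  have comp : ∀ i : ι, ∃ m : M,
      q m = ψ.symm (LinearMap.inr R (Fin n →₀ R) _
        (DirectSum.lof R ι D i (Submodule.Quotient.mk 1))) ∧ (π i ^ e i) • m = 0 := by
    intro i
    obtain ⟨u, hu⟩ := (hassoc (π i) (hπ i)).pow_pow (n := e i)
    set ν : M ⧸ F := ψ.symm (LinearMap.inr R (Fin n →₀ R) _
        (DirectSum.lof R ι D i (Submodule.Quotient.mk 1))) with hν
    have h1 : (π i ^ e i) • (Submodule.Quotient.mk (1:R) : D i) = 0 := by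
      rw [← Submodule.Quotient.mk_smul, Submodule.Quotient.mk_eq_zero]
      simpa using Submodule.mem_span_singleton_self _
    have hcν : (π i ^ e i) • ν = 0 := by
      rw [hν, ← map_smul, ← map_smul, ← map_smul, h1, map_zero, map_zero, map_zero]
    have hpν : (ϖ ^ e i) • ν = 0 := by
      rw [← hu, mul_comm, mul_smul, hcν, smul_zero]
    obtain ⟨m, hm1, hm2⟩ := key ν (e i) hpν
    refine ⟨m, hm1, ?_⟩
    have hc : (π i ^ e i : R) = (u⁻¹ : Rˣ) * ϖ ^ e i := by
      rw [← hu, mul_comm ((π i) ^ e i), ← mul_assoc, Units.inv_mul, one_mul]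
    rw [hc, mul_smul, hm2, smul_zero]
  choose m hm1 hm2 using comp
  -- assemble section
  set t₂ : (⨁ i : ι, D i) →ₗ[R] M :=
    DirectSum.toModule R ι M (fun i => Submodule.liftQ (R ∙ π i ^ e i)
      (LinearMap.toSpanSingleton R M (m i))
      (by rw [Submodule.span_singleton_le_iff_mem, LinearMap.mem_ker,
            LinearMap.toSpanSingleton_apply]; exact hm2 i)) with ht₂
  set t : ((Fin n →₀ R) × ⨁ i : ι, D i) →ₗ[R] M := LinearMap.coprod t₁ t₂ with ht
  have hqt : q.comp t = ψ.symm.toLinearMap := by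
    rw [ht, LinearMap.comp_coprod]
    have h2 : q.comp t₂ = ψ.symm.toLinearMap.comp (LinearMap.inr R (Fin n →₀ R) _) := by
      refine DirectSum.linearMap_ext _ fun i => ?_
      refine Submodule.linearMap_qext _ (LinearMap.ext_ring ?_)
      simp only [LinearMap.comp_apply, Submodule.mkQ_apply, ht₂]
      rw [DirectSum.toModule_lof, Submodule.liftQ_apply, LinearMap.toSpanSingleton_apply,
        one_smul]
      exact hm1 i
    rw [ht₁, h2, ← LinearMap.comp_coprod, LinearMap.coprod_inl_inr, LinearMap.comp_id]
  set s : (M ⧸ F) →ₗ[R] M := t.comp ψ.toLinearMap with hs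
  have hsec : ∀ ν : M ⧸ F, q (s ν) = ν := by
    intro ν
    have := LinearMap.congr_fun hqt (ψ ν)
    simpa [hs] using this
  refine ⟨LinearMap.range s, ?_, ?_⟩
  · rw [disjoint_iff_inf_le]
    rintro x ⟨hxF, y, rfl⟩
    have h0 : q (s y) = 0 := by
      rw [hq, ← LinearMap.mem_ker, Submodule.ker_mkQ]; exact hxF
    have hy : y = 0 := by rw [← hsec y, h0]
    simp [hy]
  · rw [codisjoint_iff_le_sup]
    intro x _
    have hx1 : x - s (q x) ∈ F := by
      have h0 : q (x - s (q x)) = 0 := by rw [map_sub, hsec, sub_self]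
      rwa [hq, Submodule.mkQ_apply, Submodule.Quotient.mk_eq_zero] at h0
    simpa using Submodule.add_mem_sup hx1 (LinearMap.mem_range_self s (q x))

/-- **Lemma 4.11 (split filtration lemma).** Let `F ⊆ M` be an inclusion of finitely generated
`W(k)`-modules.  If the induced maps `F/p^nF → M/p^nM` are injective for all `n ≥ 1`
(equivalently, `F ∩ p^n·M = p^n·F` for all `n ≥ 1`), then `F` is a direct summand of `M`. -/
theorem stmt9 (p : ℕ) [Fact p.Prime] (k : Type*) [Field k] [CharP k p] [PerfectField k]
    (M : Type*) [AddCommGroup M] [Module (WittVector p k) M] [Module.Finite (WittVector p k) M]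
    (F : Submodule (WittVector p k) M)
    (h : ∀ n : ℕ, 1 ≤ n → ∀ x ∈ F,
      (∃ y : M, x = ((p : WittVector p k) ^ n) • y) →
      ∃ y ∈ F, x = ((p : WittVector p k) ^ n) • y) :
    ∃ G : Submodule (WittVector p k) M, IsCompl F G := by
  haveI : IsDiscreteValuationRing (WittVector p k) := WittVector.isDiscreteValuationRing
  exact aux_split (p : WittVector p k)
    (fun a ha => IsDiscreteValuationRing.associated_of_irreducible _ ha (WittVector.irreducible p))
    F h
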